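/- Let R be a commutative ring object in a symmetric monoidal category C (or a commutative A-algebra) which is idempotent, i.e. the multiplication map R ⊗ R → R is an isomorphism. Then the forgetful functor from R-modules in C to C is fully faithful on the essential image of the base-change functor; equivalently, for R-modules M, N, the natural map Hom_R(M, N) → Hom_C(M, N) is a bijection. In particular, base change C → Mod_R is a localization. -/
import Mathlib

open TensorProduct

/-- If `B` is an idempotent commutative `A`-algebra (the multiplication
`B ⊗[A] B → B` is an isomorphism), then for `B`-modules `M`, `N` the natural map
`Hom_B(M, N) → Hom_A(M, N)` is a bijection: the forgetful functor is fully faithful. -/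
theorem forget_fullyFaithful_of_idempotent (A B : Type*) [CommRing A] [CommRing B]
    [Algebra A B] (hB : Function.Bijective (LinearMap.mul' A B))
    (M N : Type*) [AddCommGroup M] [Module A M] [Module B M] [IsScalarTower A B M]
    [AddCommGroup N] [Module A N] [Module B N] [IsScalarTower A B N] :
    Function.Bijective (fun f : M →ₗ[B] N => (f.restrictScalars A : M →ₗ[A] N)) := by
  have key : ∀ b : B, (b ⊗ₜ[A] (1 : B) : B ⊗[A] B) = (1 : B) ⊗ₜ[A] b := by
    intro b
    apply hB.1
    simp [LinearMap.mul'_apply]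
  constructor
  · intro f g h
    ext m
    exact congrFun (congrArg DFunLike.coe h) m
  · intro f
    have hsmul : ∀ (b : B) (m : M), f (b • m) = b • f m := by
      intro b m
      let L : B →ₗ[A] B →ₗ[A] N :=
        { toFun := fun b =>
            { toFun := fun c => b • f (c • m)
              map_add' := by intro x y; simp [add_smul]
              map_smul' := by
                intro a x
                simp [smul_assoc, smul_comm a b] }
          map_add' := by intro x y; ext c; simp [add_smul]
          map_smul' := by intro a x; ext c; simp [smul_assoc] }
      have := congrArg (TensorProduct.lift L) (key b)
      simpa [L] using this.symm
    exact ⟨{ toFun := f, map_add' := f.map_add,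
             map_smul' := fun b m => hsmul b m }, rfl⟩
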